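/- For every dimension d ≥ 2 and board length n ≥ 3, and every ε ∈ (0,1), the mixing time of the Rook's Walk satisfies the lower bound t_mix(ε) ≥ ( log( d(n−1)/(2n) ) + log( (1−ε)/ε ) ) / ( 2·log( d(n−1)/(d(n−1)−n) ) ). -/

import Mathlib

open Finset

noncomputable section

/-- Total variation distance between two distributions on a finite set. -/
def tv {S : Type*} [Fintype S] (μ ν : S → ℝ) : ℝ :=
  (∑ s, |μ s - ν s|) / 2

/-- The state space of the Rook's Walk: a `d`-dimensional board of side length `n`. -/
abbrev RW.State (n d : ℕ) : Type := Fin d → Fin n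

/-- The transition matrix of the Rook's Walk on `{1,…,n}^d`. -/
def RW.P (n d : ℕ) : Matrix (RW.State n d) (RW.State n d) ℝ :=
  Matrix.of fun x y =>
    if hammingDist x y = 1 then 1 / ((d : ℝ) * ((n : ℝ) - 1)) else 0

/-- The (uniform) stationary distribution of the Rook's Walk. -/
def RW.pi (n d : ℕ) : RW.State n d → ℝ := fun _ => 1 / (n : ℝ) ^ d

/-- Worst-case total variation distance to stationarity at time `t`. -/
def RW.dist (n d : ℕ) (t : ℕ) : ℝ :=
  ⨆ x : RW.State n d, tv ((RW.P n d ^ t) x) (RW.pi n d)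

/-- The mixing time of the Rook's Walk. -/
def RW.tmix (n d : ℕ) (ε : ℝ) : ℕ := sInf {t : ℕ | RW.dist n d t ≤ ε}

namespace RWProof

variable {n d : ℕ}

lemma ham_update (x : Fin d → Fin n) (i : Fin d) (a : Fin n) (ha : a ≠ x i) :
    hammingDist x (Function.update x i a) = 1 := by
  unfold hammingDist
  rw [Finset.card_eq_one]
  refine ⟨i, ?_⟩
  ext j
  simp only [Finset.mem_filter, Finset.mem_univ, true_and, Finset.mem_singleton]
  constructor
  · intro hj
    by_contra hne
    rw [Function.update_of_ne hne] at hj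
    exact hj rfl
  · rintro rfl
    rw [Function.update_self]
    exact fun h => ha h.symm

lemma ham_one_iff (x y : Fin d → Fin n) :
    hammingDist x y = 1 ↔ ∃ i a, a ≠ x i ∧ y = Function.update x i a := by
  constructor
  · intro h
    unfold hammingDist at h
    rw [Finset.card_eq_one] at h
    obtain ⟨i, hi⟩ := h
    have hxi : x i ≠ y i := by
      have : i ∈ ({i} : Finset (Fin d)) := Finset.mem_singleton_self i
      rw [← hi] at this
      exact (Finset.mem_filter.1 this).2
    refine ⟨i, y i, fun h => hxi h.symm, ?_⟩
    funext j
    rcases eq_or_ne j i with rfl | hj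
    · rw [Function.update_self]
    · rw [Function.update_of_ne hj]
      by_contra hne
      have : j ∈ Finset.filter (fun k => x k ≠ y k) Finset.univ :=
        Finset.mem_filter.2 ⟨Finset.mem_univ _, fun h => hne h.symm⟩
      rw [hi, Finset.mem_singleton] at this
      exact hj this
  · rintro ⟨i, a, ha, rfl⟩
    exact ham_update x i a ha

lemma sum_neighbors (x : Fin d → Fin n) (F : (Fin d → Fin n) → ℝ) :
    ∑ y, (if hammingDist x y = 1 then F y else 0)
      = ∑ i, ∑ a ∈ Finset.univ.erase (x i), F (Function.update x i a) := by
  rw [← Finset.sum_filter, Finset.sum_sigma']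
  refine (Finset.sum_bij (i := fun p _ => Function.update x p.1 p.2) ?_ ?_ ?_ ?_).symm
  · rintro ⟨i, a⟩ hp
    rw [Finset.mem_sigma] at hp
    have ha : a ≠ x i := (Finset.mem_erase.1 hp.2).1
    exact Finset.mem_filter.2 ⟨Finset.mem_univ _, ham_update x i a ha⟩
  · rintro ⟨i, a⟩ hp ⟨j, b⟩ hq h
    rw [Finset.mem_sigma] at hp hq
    have ha : a ≠ x i := (Finset.mem_erase.1 hp.2).1
    have hb : b ≠ x j := (Finset.mem_erase.1 hq.2).1
    rcases eq_or_ne i j with rfl | hij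
    · have : a = b := by
        have := congrFun h i
        simpa using this
      subst this; rfl
    · exfalso
      have := congrFun h i
      have h2 : a = x i := by
        simpa [Function.update_of_ne hij] using this
      exact ha h2
  · intro y hy
    have := (ham_one_iff x y).1 (Finset.mem_filter.1 hy).2
    obtain ⟨i, a, ha, rfl⟩ := this
    exact ⟨⟨i, a⟩, Finset.mem_sigma.2 ⟨Finset.mem_univ _,
      Finset.mem_erase.2 ⟨ha, Finset.mem_univ _⟩⟩, rfl⟩
  · intros; rfl



def gf (n : ℕ) : Fin n → ℝ := fun j => (if (j : ℕ) = 0 then 1 else 0) - 1 / n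
def ff (n d : ℕ) : (Fin d → Fin n) → ℝ := fun x => ∑ i, gf n (x i)
def lam (n d : ℕ) : ℝ := ((d : ℝ) * ((n:ℝ) - 1) - n) / ((d:ℝ) * ((n:ℝ) - 1))

lemma hD (hn : 3 ≤ n) (hd : 2 ≤ d) : (0:ℝ) < (d:ℝ) * ((n:ℝ) - 1) := by
  have h1 : (3:ℝ) ≤ n := by exact_mod_cast hn
  have h2 : (2:ℝ) ≤ d := by exact_mod_cast hd
  nlinarith

lemma hDn (hn : 3 ≤ n) (hd : 2 ≤ d) : (0:ℝ) < (d:ℝ) * ((n:ℝ) - 1) - n := by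
  have h1 : (3:ℝ) ≤ n := by exact_mod_cast hn
  have h2 : (2:ℝ) ≤ d := by exact_mod_cast hd
  nlinarith

lemma lam_pos (hn : 3 ≤ n) (hd : 2 ≤ d) : 0 < lam n d :=
  div_pos (hDn hn hd) (hD hn hd)

lemma lam_lt_one (hn : 3 ≤ n) (hd : 2 ≤ d) : lam n d < 1 := by
  rw [lam, div_lt_one (hD hn hd)]
  have h1 : (3:ℝ) ≤ n := by exact_mod_cast hn
  linarith

lemma sum_gf (hn : 3 ≤ n) : ∑ a, gf n a = 0 := by
  have hn0 : 0 < n := by omega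
  haveI : NeZero n := ⟨by omega⟩
  have h1 : ∑ a : Fin n, ((if (a : ℕ) = 0 then (1:ℝ) else 0)) = 1 := by
    have : ∀ a : Fin n, ((if (a : ℕ) = 0 then (1:ℝ) else 0)) = if a = (0 : Fin n) then (1:ℝ) else 0 := by
      intro a
      exact if_congr (by rw [Fin.ext_iff, Fin.val_zero]) rfl rfl
    rw [Finset.sum_congr rfl fun a _ => this a, Finset.sum_ite_eq' Finset.univ (0 : Fin n)]
    simp
  unfold gf
  rw [Finset.sum_sub_distrib, h1, Finset.sum_const, Finset.card_univ, Fintype.card_fin,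
    nsmul_eq_mul]
  have : (n:ℝ) ≠ 0 := by positivity
  field_simp
  ring

lemma sum_sq_gf (hn : 3 ≤ n) : ∑ a, (gf n a)^2 = ((n:ℝ)-1)/n := by
  have hn0 : 0 < n := by omega
  haveI : NeZero n := ⟨by omega⟩
  have hne : (n:ℝ) ≠ 0 := by positivity
  have key : ∀ a : Fin n, (gf n a)^2
      = (if a = (0:Fin n) then (1:ℝ) else 0) * (1 - 2/n) + 1/(n:ℝ)^2 := by
    intro a
    have hcond : ((a:ℕ) = 0) ↔ a = (0:Fin n) := by rw [Fin.ext_iff, Fin.val_zero]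
    unfold gf
    by_cases h : a = (0:Fin n)
    · rw [if_pos (hcond.2 h), if_pos h]
      field_simp
      ring
    · rw [if_neg (fun hh => h (hcond.1 hh)), if_neg h]
      field_simp
      ring
  rw [Finset.sum_congr rfl fun a _ => key a, Finset.sum_add_distrib, ← Finset.sum_mul,
    Finset.sum_ite_eq' Finset.univ (0 : Fin n) (fun _ => (1:ℝ)), Finset.sum_const,
    Finset.card_univ, Fintype.card_fin, nsmul_eq_mul]
  simp only [Finset.mem_univ, if_true]
  field_simp
  ring

lemma ff_update (x : Fin d → Fin n) (i : Fin d) (a : Fin n) :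
    ff n d (Function.update x i a) = ff n d x - gf n (x i) + gf n a := by
  unfold ff
  have : ∀ j, gf n (Function.update x i a j) =
      Function.update (fun j => gf n (x j)) i (gf n a) j := by
    intro j
    rcases eq_or_ne j i with rfl | hj
    · simp
    · simp [Function.update_of_ne hj]
  rw [Finset.sum_congr rfl fun j _ => this j]
  rw [Finset.sum_update_of_mem (Finset.mem_univ i)]
  rw [← Finset.sum_erase_add Finset.univ _ (Finset.mem_univ i), Finset.erase_eq]
  ring

lemma sum_P_mul (hn : 3 ≤ n) (hd : 2 ≤ d) (x : Fin d → Fin n) (F : (Fin d → Fin n) → ℝ) :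
    ∑ y, RW.P n d x y * F y
      = (1 / ((d:ℝ) * ((n:ℝ) - 1))) * ∑ i, ∑ a ∈ Finset.univ.erase (x i), F (Function.update x i a) := by
  have h : ∀ y, RW.P n d x y * F y
      = if hammingDist x y = 1 then (1 / ((d:ℝ) * ((n:ℝ)-1))) * F y else 0 := by
    intro y
    by_cases hy : hammingDist x y = 1 <;> simp [RW.P, hy]
  rw [Finset.sum_congr rfl fun y _ => h y, sum_neighbors, Finset.mul_sum]
  exact Finset.sum_congr rfl fun i _ => (Finset.mul_sum _ _ _).symm

lemma erase_sum_gf (hn : 3 ≤ n) (b : Fin n) :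
    ∑ a ∈ Finset.univ.erase b, gf n a = - gf n b := by
  have := Finset.sum_erase_add Finset.univ (gf n) (Finset.mem_univ b)
  rw [sum_gf hn] at this
  linarith

lemma card_erase (b : Fin n) : (Finset.univ.erase b).card = n - 1 := by
  rw [Finset.card_erase_of_mem (Finset.mem_univ b), Finset.card_univ, Fintype.card_fin]

lemma row_sum_P (hn : 3 ≤ n) (hd : 2 ≤ d) (x : Fin d → Fin n) :
    ∑ y, RW.P n d x y = 1 := by
  have := sum_P_mul hn hd x (fun _ => 1)
  simp only [mul_one] at this
  rw [this]
  have hcard : ∀ i : Fin d, ∑ a ∈ Finset.univ.erase (x i), (1:ℝ) = ((n:ℝ) - 1) := by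
    intro i
    rw [Finset.sum_const, card_erase]
    have hn1 : 1 ≤ n := by omega
    rw [nsmul_eq_mul, Nat.cast_sub hn1]
    push_cast
    ring
  rw [Finset.sum_congr rfl fun i _ => hcard i, Finset.sum_const, Finset.card_univ,
    Fintype.card_fin, nsmul_eq_mul]
  rw [one_div, inv_mul_eq_div, div_self (ne_of_gt (hD hn hd))]

lemma eigen (hn : 3 ≤ n) (hd : 2 ≤ d) (x : Fin d → Fin n) :
    ∑ y, RW.P n d x y * ff n d y = lam n d * ff n d x := by
  rw [sum_P_mul hn hd x]
  have hinner : ∀ i : Fin d, ∑ a ∈ Finset.univ.erase (x i), ff n d (Function.update x i a)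
      = ((n:ℝ) - 1) * (ff n d x - gf n (x i)) - gf n (x i) := by
    intro i
    have : ∀ a, ff n d (Function.update x i a) = (ff n d x - gf n (x i)) + gf n a :=
      fun a => ff_update x i a
    rw [Finset.sum_congr rfl fun a _ => this a, Finset.sum_add_distrib, Finset.sum_const,
      card_erase, erase_sum_gf hn, nsmul_eq_mul]
    have hn1 : 1 ≤ n := by omega
    push_cast [Nat.cast_sub hn1]
    ring
  rw [Finset.sum_congr rfl fun i _ => hinner i]
  have hsg : ∑ i, gf n (x i) = ff n d x := rfl
  have h1 : ∑ i : Fin d, (((n:ℝ) - 1) * (ff n d x - gf n (x i)) - gf n (x i))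
      = ((d:ℝ) * ((n:ℝ)-1) - (n:ℝ)) * ff n d x := by
    rw [Finset.sum_sub_distrib, ← Finset.mul_sum, Finset.sum_sub_distrib, Finset.sum_const,
      Finset.card_univ, Fintype.card_fin, hsg, nsmul_eq_mul]
    ring
  rw [h1, lam]
  have hD' := hD hn hd
  field_simp



lemma Epos (N : ℝ) (hN : 3 ≤ N) : 0 ≤ 7*N^4 - 26*N^3 + 27*N^2 - 4*N - 4 := by
  nlinarith [sq_nonneg (N-3), sq_nonneg N, mul_nonneg (sub_nonneg.2 hN) (sub_nonneg.2 hN), sq_nonneg (N-1)]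

lemma Ppos (N : ℝ) (hN : 3 ≤ N) : 0 ≤ 10*N^4 - 44*N^3 + 50*N^2 - 8*N - 8 := by
  nlinarith [sq_nonneg (N-3), mul_nonneg (mul_nonneg (sub_nonneg.2 hN) (sub_nonneg.2 hN)) (sub_nonneg.2 hN), sq_nonneg N]

lemma Bpos (N D : ℝ) (hN : 3 ≤ N) (hD : 2 ≤ D) :
    0 ≤ 4*N*D*(2*(N-1)^3 - N*(N-2)) - 4*N^2*(N-1)^2 - D*(N^2-N+2)^2 := by
  have hE := Epos N hN
  have hP := Ppos N hN
  nlinarith [mul_nonneg (sub_nonneg.2 hD) hE]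

lemma quad (N D K : ℝ) (hN : 3 ≤ N) (hD : 2 ≤ D) :
    N*D*(N-1)*(K*(N-2)+D) ≤ N*(N*K-D)^2 + D*(N-1)^2*(2*D*(N-1)-N) := by
  have hB := Bpos N D hN hD
  have hN3 : (0:ℝ) < 4*N^3 := by nlinarith
  have key : 4*N^3 * ((N*(N*K-D)^2 + D*(N-1)^2*(2*D*(N-1)-N)) - N*D*(N-1)*(K*(N-2)+D))
      = (2*N^3*K - N*D*(N^2-N+2))^2
        + N^2*D*(4*N*D*(2*(N-1)^3 - N*(N-2)) - 4*N^2*(N-1)^2 - D*(N^2-N+2)^2) := by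
    ring
  nlinarith [sq_nonneg (2*N^3*K - N*D*(N^2-N+2)), mul_nonneg (mul_nonneg (sq_nonneg N) (by linarith : (0:ℝ) ≤ D)) hB]

lemma step_core (N Dd K : ℝ) (hN : 3 ≤ N) (hD2 : 2 ≤ Dd) :
    (1/(Dd*(N-1))) * ((Dd*(N-1))*(K - Dd/N)^2 - 2*N*(K - Dd/N)^2 + ((N-2)*K + Dd))
      ≤ ((Dd*(N-1)-N)/(Dd*(N-1)))^2*(K - Dd/N)^2
        + (1+(Dd*(N-1)-N)/(Dd*(N-1)))*((N-1)/N) := by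
  have hq := quad N Dd K hN hD2
  have hN0 : (0:ℝ) < N := by linarith
  have hD0 : (0:ℝ) < Dd*(N-1) := by nlinarith
  rw [div_pow, ← sub_nonneg]
  have key : ((Dd*(N-1)-N)^2/(Dd*(N-1))^2*(K - Dd/N)^2
        + (1+(Dd*(N-1)-N)/(Dd*(N-1)))*((N-1)/N))
      - (1/(Dd*(N-1))) * ((Dd*(N-1))*(K - Dd/N)^2 - 2*N*(K - Dd/N)^2 + ((N-2)*K + Dd))
      = ((N*(N*K-Dd)^2 + Dd*(N-1)^2*(2*Dd*(N-1)-N)) - N*Dd*(N-1)*(K*(N-2)+Dd))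
          / (N * (Dd*(N-1))^2) := by
    have hN1 : N - 1 ≠ 0 := by linarith
    have hDd : Dd ≠ 0 := by linarith
    field_simp
    ring
  rw [key]
  apply div_nonneg (by linarith) (by positivity)

def kcount (x : Fin d → Fin n) : ℕ := (Finset.univ.filter fun i => (x i : ℕ) = 0).card

lemma kcount_le (x : Fin d → Fin n) : kcount x ≤ d := by
  unfold kcount
  calc (Finset.univ.filter fun i => (x i : ℕ) = 0).card
      ≤ (Finset.univ : Finset (Fin d)).card := Finset.card_filter_le _ _
    _ = d := by simp

lemma ff_eq (x : Fin d → Fin n) : ff n d x = (kcount x : ℝ) - d / n := by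
  unfold ff gf kcount
  rw [Finset.sum_sub_distrib, Finset.sum_boole, Finset.sum_const, Finset.card_univ,
    Fintype.card_fin, nsmul_eq_mul]
  ring

lemma erase_sum_diff (hn : 3 ≤ n) (b : Fin n) :
    ∑ a ∈ Finset.univ.erase b, (gf n a - gf n b) = -(n:ℝ) * gf n b := by
  rw [Finset.sum_sub_distrib, erase_sum_gf hn, Finset.sum_const, card_erase, nsmul_eq_mul,
    Nat.cast_sub (by omega : 1 ≤ n)]
  push_cast
  ring

lemma sum_sq_diff (hn : 3 ≤ n) (b : Fin n) :
    ∑ a ∈ Finset.univ.erase b, (gf n a - gf n b)^2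
      = if (b : ℕ) = 0 then ((n:ℝ)-1) else 1 := by
  haveI : NeZero n := ⟨by omega⟩
  have hg : ∀ a c : Fin n, gf n a - gf n c
      = (if (a:ℕ) = 0 then (1:ℝ) else 0) - (if (c:ℕ) = 0 then (1:ℝ) else 0) := by
    intro a c; unfold gf; ring
  by_cases hb : (b:ℕ) = 0
  · rw [if_pos hb]
    have hone : ∀ a ∈ Finset.univ.erase b, (gf n a - gf n b)^2 = 1 := by
      intro a ha
      have hab : a ≠ b := (Finset.mem_erase.1 ha).1
      have ha0 : ¬ (a:ℕ) = 0 := fun h => hab (Fin.ext (by rw [h, hb]))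
      rw [hg, if_neg ha0, if_pos hb]; norm_num
    rw [Finset.sum_congr rfl hone, Finset.sum_const, card_erase, nsmul_eq_mul,
      Nat.cast_sub (by omega : 1 ≤ n)]
    push_cast; ring
  · rw [if_neg hb]
    have hsq : ∀ a ∈ Finset.univ.erase b, (gf n a - gf n b)^2
        = if a = (0 : Fin n) then (1:ℝ) else 0 := by
      intro a _
      rw [hg, if_neg hb]
      by_cases h0 : (a:ℕ) = 0
      · rw [if_pos h0, if_pos (Fin.ext (by simpa using h0))]; norm_num
      · rw [if_neg h0, if_neg (fun h => h0 (by rw [h]; simp))]; norm_num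
    rw [Finset.sum_congr rfl hsq,
      Finset.sum_ite_eq' (Finset.univ.erase b) (0 : Fin n) (fun _ => (1:ℝ))]
    rw [if_pos (Finset.mem_erase.2 ⟨fun h => hb (by rw [← h]; simp), Finset.mem_univ _⟩)]

lemma step_sq (hn : 3 ≤ n) (hd : 2 ≤ d) (x : Fin d → Fin n) :
    ∑ y, RW.P n d x y * (ff n d y)^2
      ≤ (lam n d)^2 * (ff n d x)^2 + (1 + lam n d) * (((n:ℝ)-1)/n) := by
  haveI : NeZero n := ⟨by omega⟩
  have hD0 := hD hn hd
  rw [sum_P_mul hn hd x]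
  have hinner : ∀ i, ∑ a ∈ Finset.univ.erase (x i), (ff n d (Function.update x i a))^2
      = ((n:ℝ)-1) * (ff n d x)^2 - 2*(n:ℝ)*(ff n d x)*(gf n (x i))
        + (if (x i : ℕ) = 0 then ((n:ℝ)-1) else 1) := by
    intro i
    have h1 : ∀ a, (ff n d (Function.update x i a))^2
        = (ff n d x)^2 + 2*(ff n d x)*(gf n a - gf n (x i)) + (gf n a - gf n (x i))^2 := by
      intro a; rw [ff_update]; ring
    rw [Finset.sum_congr rfl fun a _ => h1 a, Finset.sum_add_distrib, Finset.sum_add_distrib,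
      Finset.sum_const, card_erase, ← Finset.mul_sum, erase_sum_diff hn, sum_sq_diff hn,
      nsmul_eq_mul, Nat.cast_sub (by omega : 1 ≤ n)]
    push_cast
    ring
  rw [Finset.sum_congr rfl fun i _ => hinner i]
  have hsum : ∑ i : Fin d, (((n:ℝ)-1) * (ff n d x)^2 - 2*(n:ℝ)*(ff n d x)*(gf n (x i))
        + (if (x i : ℕ) = 0 then ((n:ℝ)-1) else 1))
      = ((d:ℝ)*((n:ℝ)-1))*(ff n d x)^2 - 2*(n:ℝ)*(ff n d x)^2
        + (((n:ℝ)-2) * ((kcount x : ℕ) : ℝ) + (d:ℝ)) := by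
    have hit : ∀ i : Fin d, (if (x i : ℕ) = 0 then ((n:ℝ)-1) else 1)
        = ((n:ℝ)-2) * (if (x i : ℕ) = 0 then (1:ℝ) else 0) + 1 := by
      intro i; by_cases h : (x i : ℕ) = 0 <;> simp [h] <;> ring
    rw [Finset.sum_add_distrib, Finset.sum_sub_distrib, Finset.sum_const, Finset.card_univ,
      Fintype.card_fin, Finset.sum_congr rfl fun i _ => hit i, Finset.sum_add_distrib,
      Finset.sum_const, Finset.card_univ, Fintype.card_fin, ← Finset.mul_sum,
      ← Finset.mul_sum, Finset.sum_boole]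
    have hffx : ∑ i, gf n (x i) = ff n d x := rfl
    rw [hffx]
    unfold kcount
    push_cast
    ring
  rw [hsum, ff_eq x]
  have hcore := step_core (n:ℝ) (d:ℝ) ((kcount x : ℕ) : ℝ)
    (by exact_mod_cast hn) (by exact_mod_cast hd)
  unfold lam
  convert hcore using 2


lemma P_nonneg (hn : 3 ≤ n) (hd : 2 ≤ d) (x y : Fin d → Fin n) : 0 ≤ RW.P n d x y := by
  unfold RW.P
  rw [Matrix.of_apply]
  by_cases h : hammingDist x y = 1
  · rw [if_pos h]
    have := hD hn hd
    positivity
  · rw [if_neg h]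

lemma Ppow_nonneg (hn : 3 ≤ n) (hd : 2 ≤ d) (t : ℕ) (x y : Fin d → Fin n) : 0 ≤ (RW.P n d ^ t) x y := by
  induction t generalizing x y with
  | zero =>
    rw [pow_zero, Matrix.one_apply]
    by_cases h : x = y
    · rw [if_pos h]; norm_num
    · rw [if_neg h]
  | succ t ih =>
    rw [pow_succ, Matrix.mul_apply]
    exact Finset.sum_nonneg fun z _ => mul_nonneg (ih x z) (P_nonneg hn hd z y)

lemma Ppow_rowsum (hn : 3 ≤ n) (hd : 2 ≤ d) (t : ℕ) (x : Fin d → Fin n) :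
    ∑ y, (RW.P n d ^ t) x y = 1 := by
  induction t generalizing x with
  | zero =>
    simp [Matrix.one_apply]
  | succ t ih =>
    simp only [pow_succ, Matrix.mul_apply]
    rw [Finset.sum_comm]
    have h1 : ∀ z, ∑ y, (RW.P n d ^ t) x z * RW.P n d z y = (RW.P n d ^ t) x z := by
      intro z
      rw [← Finset.mul_sum, row_sum_P hn hd z, mul_one]
    rw [Finset.sum_congr rfl fun z _ => h1 z, ih x]

lemma Ppow_colsum (hn : 3 ≤ n) (hd : 2 ≤ d) (t : ℕ) (y : Fin d → Fin n) :
    ∑ x, (RW.P n d ^ t) x y = 1 := by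
  induction t generalizing y with
  | zero => simp [Matrix.one_apply]
  | succ t ih =>
    simp only [pow_succ, Matrix.mul_apply]
    rw [Finset.sum_comm]
    have h1 : ∀ z, ∑ x, (RW.P n d ^ t) x z * RW.P n d z y
        = RW.P n d z y := by
      intro z
      rw [← Finset.sum_mul, ih z, one_mul]
    rw [Finset.sum_congr rfl fun z _ => h1 z]
    have h2 : ∀ z, RW.P n d z y = RW.P n d y z := by
      intro z
      unfold RW.P
      rw [Matrix.of_apply, Matrix.of_apply, hammingDist_comm]
    rw [Finset.sum_congr rfl fun z _ => h2 z, row_sum_P hn hd y]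

lemma Ppow_eigen (hn : 3 ≤ n) (hd : 2 ≤ d) (t : ℕ) (x : Fin d → Fin n) :
    ∑ y, (RW.P n d ^ t) x y * ff n d y = (lam n d)^t * ff n d x := by
  induction t generalizing x with
  | zero => simp [Matrix.one_apply, Finset.sum_ite_eq]
  | succ t ih =>
    rw [pow_succ']
    simp only [Matrix.mul_apply]
    have h1 : ∀ y, (∑ z, RW.P n d x z * (RW.P n d ^ t) z y) * ff n d y
        = ∑ z, RW.P n d x z * ((RW.P n d ^ t) z y * ff n d y) := by
      intro y
      rw [Finset.sum_mul]
      exact Finset.sum_congr rfl fun z _ => by ring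
    rw [Finset.sum_congr rfl fun y _ => h1 y, Finset.sum_comm]
    have h2 : ∀ z, ∑ y, RW.P n d x z * ((RW.P n d ^ t) z y * ff n d y)
        = (lam n d)^t * (RW.P n d x z * ff n d z) := by
      intro z
      rw [← Finset.mul_sum, ih z]
      ring
    rw [Finset.sum_congr rfl fun z _ => h2 z, ← Finset.mul_sum, eigen hn hd x, pow_succ]
    ring

def Vb (n d : ℕ) : ℝ := (d:ℝ) * ((n:ℝ)-1)^2 / (n:ℝ)^2

lemma Rprime_eq (hn : 3 ≤ n) (hd : 2 ≤ d) :
    (1 + lam n d) * (((n:ℝ)-1)/n) = (1 - (lam n d)^2) * Vb n d := by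
  have hD0 := hD hn hd
  have hn0 : (0:ℝ) < n := by positivity
  unfold lam Vb
  have hn1 : (n:ℝ) - 1 ≠ 0 := by
    have h3 : (3:ℝ) ≤ n := by exact_mod_cast hn
    linarith
  have hd1 : (d:ℝ) ≠ 0 := by
    have h2 : (2:ℝ) ≤ d := by exact_mod_cast hd
    linarith
  field_simp
  ring

lemma Ppow_sq (hn : 3 ≤ n) (hd : 2 ≤ d) (t : ℕ) (x : Fin d → Fin n) :
    ∑ y, (RW.P n d ^ t) x y * (ff n d y)^2
      ≤ (lam n d)^(2*t) * (ff n d x)^2 + (1 - (lam n d)^(2*t)) * Vb n d := by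
  induction t generalizing x with
  | zero =>
    simp [Matrix.one_apply, Finset.sum_ite_eq]
  | succ t ih =>
    rw [pow_succ']
    simp only [Matrix.mul_apply]
    have h1 : ∀ y, (∑ z, RW.P n d x z * (RW.P n d ^ t) z y) * (ff n d y)^2
        = ∑ z, RW.P n d x z * ((RW.P n d ^ t) z y * (ff n d y)^2) := by
      intro y
      rw [Finset.sum_mul]
      exact Finset.sum_congr rfl fun z _ => by ring
    rw [Finset.sum_congr rfl fun y _ => h1 y, Finset.sum_comm]
    have h2 : ∀ z, ∑ y, RW.P n d x z * ((RW.P n d ^ t) z y * (ff n d y)^2)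
        = RW.P n d x z * (∑ y, (RW.P n d ^ t) z y * (ff n d y)^2) := by
      intro z
      rw [← Finset.mul_sum]
    rw [Finset.sum_congr rfl fun z _ => h2 z]
    have hlam0 : (0:ℝ) ≤ lam n d := le_of_lt (lam_pos hn hd)
    have hlt : (0:ℝ) ≤ (lam n d)^(2*t) := pow_nonneg hlam0 _
    have step1 : ∑ z, RW.P n d x z * (∑ y, (RW.P n d ^ t) z y * (ff n d y)^2)
        ≤ ∑ z, RW.P n d x z * ((lam n d)^(2*t) * (ff n d z)^2 + (1 - (lam n d)^(2*t)) * Vb n d) :=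
      Finset.sum_le_sum fun z _ => mul_le_mul_of_nonneg_left (ih z) (P_nonneg hn hd x z)
    have step2 : ∑ z, RW.P n d x z * ((lam n d)^(2*t) * (ff n d z)^2 + (1 - (lam n d)^(2*t)) * Vb n d)
        = (lam n d)^(2*t) * (∑ z, RW.P n d x z * (ff n d z)^2)
          + (1 - (lam n d)^(2*t)) * Vb n d := by
      have expand : ∀ z, RW.P n d x z * ((lam n d)^(2*t) * (ff n d z)^2 + (1 - (lam n d)^(2*t)) * Vb n d)
          = (lam n d)^(2*t) * (RW.P n d x z * (ff n d z)^2)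
            + ((1 - (lam n d)^(2*t)) * Vb n d) * RW.P n d x z := fun z => by ring
      rw [Finset.sum_congr rfl fun z _ => expand z, Finset.sum_add_distrib, ← Finset.mul_sum,
        ← Finset.mul_sum, row_sum_P hn hd x, mul_one]
    have step3 : (lam n d)^(2*t) * (∑ z, RW.P n d x z * (ff n d z)^2)
          + (1 - (lam n d)^(2*t)) * Vb n d
        ≤ (lam n d)^(2*t) * ((lam n d)^2 * (ff n d x)^2 + (1 + lam n d) * (((n:ℝ)-1)/n))
          + (1 - (lam n d)^(2*t)) * Vb n d :=
      add_le_add (mul_le_mul_of_nonneg_left (step_sq hn hd x) hlt) le_rfl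
    have e : 2*(t+1) = 2*t + 2 := by ring
    have step4 : (lam n d)^(2*t) * ((lam n d)^2 * (ff n d x)^2 + (1 + lam n d) * (((n:ℝ)-1)/n))
          + (1 - (lam n d)^(2*t)) * Vb n d
        = (lam n d)^(2*(t+1)) * (ff n d x)^2 + (1 - (lam n d)^(2*(t+1))) * Vb n d := by
      rw [Rprime_eq hn hd, e, pow_add]
      ring
    calc ∑ z, RW.P n d x z * (∑ y, (RW.P n d ^ t) z y * (ff n d y)^2)
        ≤ _ := step1
      _ = _ := step2
      _ ≤ _ := step3
      _ = _ := step4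


lemma sum_single (hn : 3 ≤ n) (hd : 1 ≤ d) (G : Fin n → ℝ) (i : Fin d) :
    ∑ z : Fin d → Fin n, G (z i) = (n:ℝ)^(d-1) * ∑ a, G a := by
  have h1 : ∀ z : Fin d → Fin n, G (z i) = ∏ j, (if j = i then G (z j) else 1) := by
    intro z
    rw [Finset.prod_ite_eq' Finset.univ i (fun j => G (z j)), if_pos (Finset.mem_univ i)]
  rw [Finset.sum_congr rfl fun z _ => h1 z]
  have h2 : ∑ z : Fin d → Fin n, ∏ j, (if j = i then G (z j) else 1)
      = ∏ j, ∑ a, (if j = i then G a else 1) := by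
    rw [Finset.prod_univ_sum]
    rw [Fintype.piFinset_univ]
  rw [h2, ← Finset.mul_prod_erase Finset.univ _ (Finset.mem_univ i)]
  have h3 : ∑ a, (if i = i then G a else (1:ℝ)) = ∑ a, G a := by simp
  have h4 : ∀ j ∈ Finset.univ.erase i, ∑ a, (if j = i then G a else (1:ℝ)) = (n:ℝ) := by
    intro j hj
    have hne := (Finset.mem_erase.1 hj).1
    simp [hne]
  rw [h3, Finset.prod_congr rfl h4, Finset.prod_const, card_erase i]
  ring

lemma sum_pair (hn : 3 ≤ n) (G : Fin n → ℝ) (hG : ∑ a, G a = 0) (i j : Fin d)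
    (hij : i ≠ j) : ∑ z : Fin d → Fin n, G (z i) * G (z j) = 0 := by
  have h1 : ∀ z : Fin d → Fin n, G (z i) * G (z j)
      = ∏ k, ((if k = i then G (z k) else 1) * (if k = j then G (z k) else 1)) := by
    intro z
    rw [Finset.prod_mul_distrib, Finset.prod_ite_eq' Finset.univ i (fun k => G (z k)),
      Finset.prod_ite_eq' Finset.univ j (fun k => G (z k)), if_pos (Finset.mem_univ i),
      if_pos (Finset.mem_univ j)]
  rw [Finset.sum_congr rfl fun z _ => h1 z]
  have h2 : ∑ z : Fin d → Fin n, ∏ k, ((if k = i then G (z k) else 1) * (if k = j then G (z k) else 1))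
      = ∏ k, ∑ a, ((if k = i then G a else 1) * (if k = j then G a else 1)) := by
    rw [Finset.prod_univ_sum, Fintype.piFinset_univ]
  rw [h2]
  apply Finset.prod_eq_zero (Finset.mem_univ i)
  have : ∀ a : Fin n, (if i = i then G a else (1:ℝ)) * (if i = j then G a else 1) = G a := by
    intro a
    rw [if_pos rfl, if_neg hij, mul_one]
  rw [Finset.sum_congr rfl fun a _ => this a, hG]

lemma card_state : (Fintype.card (Fin d → Fin n) : ℝ) = (n:ℝ)^d := by
  rw [Fintype.card_fun, Fintype.card_fin, Fintype.card_fin]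
  push_cast
  ring

lemma sum_pi_one (hn : 3 ≤ n) : ∑ z : Fin d → Fin n, RW.pi n d z = 1 := by
  unfold RW.pi
  rw [Finset.sum_const, Finset.card_univ, nsmul_eq_mul, card_state]
  have hn0 : (0:ℝ) < n := by
    have h3 : (3:ℝ) ≤ n := by exact_mod_cast hn
    linarith
  have hpow : ((n:ℝ))^d ≠ 0 := by positivity
  field_simp

lemma pi_mean (hn : 3 ≤ n) (hd : 2 ≤ d) : ∑ z, RW.pi n d z * ff n d z = 0 := by
  unfold RW.pi ff
  have h1 : ∑ z : Fin d → Fin n, (1/(n:ℝ)^d) * ∑ i, gf n (z i)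
      = (1/(n:ℝ)^d) * ∑ i : Fin d, ∑ z : Fin d → Fin n, gf n (z i) := by
    rw [← Finset.mul_sum, Finset.sum_comm]
  rw [h1]
  have h2 : ∀ i : Fin d, ∑ z : Fin d → Fin n, gf n (z i) = 0 := by
    intro i
    rw [sum_single hn (by omega) (gf n) i, sum_gf hn, mul_zero]
  rw [Finset.sum_congr rfl fun i _ => h2 i, Finset.sum_const]
  simp

lemma pi_sq (hn : 3 ≤ n) (hd : 2 ≤ d) :
    ∑ z, RW.pi n d z * (ff n d z)^2 = (d:ℝ) * ((n:ℝ)-1) / (n:ℝ)^2 := by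
  have hn0 : (0:ℝ) < n := by
    have h3 : (3:ℝ) ≤ n := by exact_mod_cast hn
    linarith
  unfold RW.pi ff
  have hsq : ∀ z : Fin d → Fin n, (∑ i, gf n (z i))^2
      = ∑ i : Fin d, ∑ j : Fin d, gf n (z i) * gf n (z j) := by
    intro z; rw [sq, Finset.sum_mul_sum]
  calc ∑ z : Fin d → Fin n, (1/(n:ℝ)^d) * (∑ i, gf n (z i))^2
      = (1/(n:ℝ)^d) * ∑ i : Fin d, ∑ j : Fin d, ∑ z : Fin d → Fin n, gf n (z i) * gf n (z j) := by
        rw [← Finset.mul_sum]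
        congr 1
        rw [Finset.sum_congr rfl fun z _ => hsq z, Finset.sum_comm]
        exact Finset.sum_congr rfl fun i _ => Finset.sum_comm
    _ = (1/(n:ℝ)^d) * ∑ i : Fin d, (n:ℝ)^(d-1) * (((n:ℝ)-1)/n) := by
        congr 1
        apply Finset.sum_congr rfl
        intro i _
        have hdiag : ∑ j : Fin d, ∑ z : Fin d → Fin n, gf n (z i) * gf n (z j)
            = ∑ j : Fin d, (if j = i then (n:ℝ)^(d-1) * (((n:ℝ)-1)/n) else 0) := by
          apply Finset.sum_congr rfl
          intro j _
          by_cases hij : j = i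
          · subst hij
            rw [if_pos rfl]
            rw [sum_single hn (by omega) (fun a => gf n a * gf n a) j]
            congr 1
            have hh : ∀ a, gf n a * gf n a = (gf n a)^2 := fun a => (sq _).symm
            rw [Finset.sum_congr rfl fun a _ => hh a, sum_sq_gf hn]
          · rw [if_neg hij]
            exact sum_pair hn (gf n) (sum_gf hn) i j (fun h => hij h.symm)
        rw [hdiag,
          Finset.sum_ite_eq' Finset.univ i (fun _ => (n:ℝ)^(d-1) * (((n:ℝ)-1)/n)),
          if_pos (Finset.mem_univ i)]
    _ = (d:ℝ) * ((n:ℝ)-1) / (n:ℝ)^2 := by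
        rw [Finset.sum_const, Finset.card_univ, Fintype.card_fin, nsmul_eq_mul]
        have hnd : (n:ℝ)^d = (n:ℝ)^(d-1) * n := by
          rw [← pow_succ]
          congr 1
          omega
        rw [hnd]
        field_simp


lemma tv_cs {S : Type*} [Fintype S] (μ ν : S → ℝ) (hμ0 : ∀ s, 0 ≤ μ s) (hν0 : ∀ s, 0 ≤ ν s)
    (hμ1 : ∑ s, μ s = 1) (hν1 : ∑ s, ν s = 1) (f : S → ℝ) (c : ℝ) :
    (∑ s, μ s * f s - ∑ s, ν s * f s)^2
      ≤ 2 * tv μ ν * (∑ s, μ s * (f s - c)^2 + ∑ s, ν s * (f s - c)^2) := by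
  have h1 : ∑ s, μ s * f s - ∑ s, ν s * f s = ∑ s, (μ s - ν s) * (f s - c) := by
    have e : ∀ s, (μ s - ν s) * (f s - c) = (μ s * f s - ν s * f s) - c * (μ s - ν s) :=
      fun s => by ring
    rw [Finset.sum_congr rfl fun s _ => e s, Finset.sum_sub_distrib, Finset.sum_sub_distrib,
      ← Finset.mul_sum, Finset.sum_sub_distrib, hμ1, hν1]
    ring
  rw [h1]
  set A : S → ℝ := fun s => Real.sqrt |μ s - ν s| with hA
  set B : S → ℝ := fun s => Real.sqrt |μ s - ν s| * |f s - c| with hB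
  have habs : |∑ s, (μ s - ν s) * (f s - c)| ≤ ∑ s, A s * B s := by
    calc |∑ s, (μ s - ν s) * (f s - c)| ≤ ∑ s, |(μ s - ν s) * (f s - c)| :=
          Finset.abs_sum_le_sum_abs _ _
      _ = ∑ s, A s * B s := by
          apply Finset.sum_congr rfl
          intro s _
          rw [abs_mul, hA, hB]
          rw [← mul_assoc, Real.mul_self_sqrt (abs_nonneg _)]
  have hcs : (∑ s, A s * B s)^2 ≤ (∑ s, (A s)^2) * (∑ s, (B s)^2) :=
    Finset.sum_mul_sq_le_sq_mul_sq _ _ _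
  have hAB : (∑ s, (A s)^2) = 2 * tv μ ν := by
    have : ∀ s, (A s)^2 = |μ s - ν s| := fun s => Real.sq_sqrt (abs_nonneg _)
    rw [Finset.sum_congr rfl fun s _ => this s]
    unfold tv
    ring
  have hB2 : (∑ s, (B s)^2) ≤ ∑ s, μ s * (f s - c)^2 + ∑ s, ν s * (f s - c)^2 := by
    rw [← Finset.sum_add_distrib]
    apply Finset.sum_le_sum
    intro s _
    have e : (B s)^2 = |μ s - ν s| * (f s - c)^2 := by
      rw [hB, mul_pow, Real.sq_sqrt (abs_nonneg _), sq_abs]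
    rw [e]
    have habs2 : |μ s - ν s| ≤ μ s + ν s :=
      abs_le.mpr ⟨by linarith [hμ0 s, hν0 s], by linarith [hμ0 s, hν0 s]⟩
    have := mul_le_mul_of_nonneg_right habs2 (sq_nonneg (f s - c))
    linarith [this]
  have htv0 : 0 ≤ 2 * tv μ ν := by
    have : (0:ℝ) ≤ ∑ s, |μ s - ν s| := Finset.sum_nonneg fun s _ => abs_nonneg _
    unfold tv
    linarith
  calc (∑ s, (μ s - ν s) * (f s - c))^2 = |∑ s, (μ s - ν s) * (f s - c)|^2 := (sq_abs _).symm
    _ ≤ (∑ s, A s * B s)^2 := by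
        apply pow_le_pow_left₀ (abs_nonneg _) habs
    _ ≤ (∑ s, (A s)^2) * (∑ s, (B s)^2) := hcs
    _ ≤ 2 * tv μ ν * (∑ s, μ s * (f s - c)^2 + ∑ s, ν s * (f s - c)^2) := by
        rw [hAB]
        exact mul_le_mul_of_nonneg_left hB2 htv0


lemma ff_xstar (hn : 3 ≤ n) (hd : 2 ≤ d) :
    ff n d (fun _ : Fin d => (⟨0, by omega⟩ : Fin n)) = (d:ℝ)*((n:ℝ)-1)/n := by
  rw [ff_eq]
  have hk : kcount (fun _ : Fin d => (⟨0, by omega⟩ : Fin n)) = d := by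
    unfold kcount
    rw [Finset.filter_true_of_mem fun i _ => rfl, Finset.card_univ, Fintype.card_fin]
  rw [hk]
  have hn0 : (0:ℝ) < n := by
    have h3 : (3:ℝ) ≤ n := by exact_mod_cast hn
    linarith
  field_simp

set_option maxHeartbeats 2000000 in
lemma key_bound (hn : 3 ≤ n) (hd : 2 ≤ d) (ε : ℝ) (hε0 : 0 < ε) (hε1 : ε < 1)
    (t : ℕ) (hdist : RW.dist n d t ≤ ε) :
    (lam n d)^(2*t) ≤ (2*(n:ℝ)/((d:ℝ)*((n:ℝ)-1))) * (ε/(1-ε)) := by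
  have hn0 : (0:ℝ) < n := by
    have h3 : (3:ℝ) ≤ n := by exact_mod_cast hn
    linarith
  have hd0 : (0:ℝ) < d := by
    have h2 : (2:ℝ) ≤ d := by exact_mod_cast hd
    linarith
  have hD0 := hD hn hd
  set xs : Fin d → Fin n := fun _ => (⟨0, by omega⟩ : Fin n) with hxs
  set μ : (Fin d → Fin n) → ℝ := (RW.P n d ^ t) xs with hμ
  set ν : (Fin d → Fin n) → ℝ := RW.pi n d with hν
  set F : ℝ := (d:ℝ)*((n:ℝ)-1)/n with hF
  set Δ : ℝ := (lam n d)^t * F with hΔ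
  set c : ℝ := Δ/2 with hc
  have hFpos : 0 < F := by rw [hF]; positivity
  have htv_le : tv μ ν ≤ ε := by
    refine le_trans ?_ hdist
    have hb : BddAbove (Set.range fun x : Fin d → Fin n => tv ((RW.P n d ^ t) x) (RW.pi n d)) :=
      Set.Finite.bddAbove (Set.finite_range _)
    exact le_ciSup hb xs
  have htv0 : 0 ≤ tv μ ν := by
    unfold tv
    have : (0:ℝ) ≤ ∑ s, |μ s - ν s| := Finset.sum_nonneg fun s _ => abs_nonneg _
    linarith
  have expand : ∀ (w : (Fin d → Fin n) → ℝ), ∑ y, w y * (ff n d y - c)^2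
      = ∑ y, w y * (ff n d y)^2 - 2*c*(∑ y, w y * ff n d y) + c^2 * (∑ y, w y) := by
    intro w
    have e : ∀ y, w y * (ff n d y - c)^2
        = w y * (ff n d y)^2 - (2*c)*(w y * ff n d y) + c^2 * w y := fun y => by ring
    rw [Finset.sum_congr rfl fun y _ => e y, Finset.sum_add_distrib, Finset.sum_sub_distrib,
      ← Finset.mul_sum, ← Finset.mul_sum]
  have hμ0 : ∀ s, 0 ≤ μ s := fun s => Ppow_nonneg hn hd t xs s
  have hν0 : ∀ s, 0 ≤ ν s := fun s => by
    rw [hν]; unfold RW.pi; positivity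
  have hμ1 : ∑ s, μ s = 1 := Ppow_rowsum hn hd t xs
  have hν1 : ∑ s, ν s = 1 := sum_pi_one hn
  have hffxs : ff n d xs = F := by
    rw [hxs, hF]
    exact ff_xstar hn hd
  have hμf : ∑ s, μ s * ff n d s = Δ := by
    rw [hμ, Ppow_eigen hn hd t xs, hffxs, hΔ]
  have hνf : ∑ s, ν s * ff n d s = 0 := pi_mean hn hd
  have hlam0 : (0:ℝ) ≤ lam n d := le_of_lt (lam_pos hn hd)
  have hl2t : (0:ℝ) ≤ (lam n d)^(2*t) := pow_nonneg hlam0 _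
  have hμsq : ∑ s, μ s * (ff n d s)^2 ≤ (lam n d)^(2*t) * F^2 + Vb n d := by
    have h := Ppow_sq hn hd t xs
    rw [hffxs] at h
    have hVb0 : 0 ≤ Vb n d := by unfold Vb; positivity
    nlinarith [mul_nonneg hl2t hVb0]
  have hνsq : ∑ s, ν s * (ff n d s)^2 = (d:ℝ)*((n:ℝ)-1)/(n:ℝ)^2 := pi_sq hn hd
  have hΔ2 : Δ^2 = (lam n d)^(2*t) * F^2 := by
    rw [hΔ, mul_pow]
    congr 1
    rw [← pow_mul, mul_comm t 2]
  -- apply CS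
  have hcs := tv_cs μ ν hμ0 hν0 hμ1 hν1 (ff n d) c
  rw [hμf, hνf, sub_zero, expand μ, expand ν, hμf, hνf, hμ1, hν1] at hcs
  -- numeric assembly
  have hsum_le : (∑ s, μ s * (ff n d s)^2 - 2*c*Δ + c^2*1) + (∑ s, ν s * (ff n d s)^2 - 2*c*0 + c^2*1)
      ≤ Δ^2/2 + (d:ℝ)*((n:ℝ)-1)/n := by
    have hVbVν : Vb n d + (d:ℝ)*((n:ℝ)-1)/(n:ℝ)^2 = (d:ℝ)*((n:ℝ)-1)/n := by
      unfold Vb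
      field_simp
      ring
    rw [hνsq, hc, hΔ2]
    nlinarith [hμsq, hVbVν, hΔ2]
  have hX0 : (0:ℝ) ≤ (∑ s, μ s * (ff n d s)^2 - 2*c*Δ + c^2*1) + (∑ s, ν s * (ff n d s)^2 - 2*c*0 + c^2*1) := by
    have e1 : ∑ s, μ s * (ff n d s)^2 - 2*c*Δ + c^2*1
        = ∑ s, μ s * (ff n d s - c)^2 := by
      rw [expand μ, hμf, hμ1]
    have e2 : ∑ s, ν s * (ff n d s)^2 - 2*c*0 + c^2*1
        = ∑ s, ν s * (ff n d s - c)^2 := by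
      rw [expand ν, hνf, hν1]
    rw [e1, e2]
    have : (0:ℝ) ≤ ∑ s, μ s * (ff n d s - c)^2 :=
      Finset.sum_nonneg fun s _ => mul_nonneg (hμ0 s) (sq_nonneg _)
    have h2 : (0:ℝ) ≤ ∑ s, ν s * (ff n d s - c)^2 :=
      Finset.sum_nonneg fun s _ => mul_nonneg (hν0 s) (sq_nonneg _)
    linarith
  have hfinal : Δ^2 ≤ 2*ε*(Δ^2/2 + (d:ℝ)*((n:ℝ)-1)/n) := by
    calc Δ^2 ≤ 2 * tv μ ν * ((∑ s, μ s * (ff n d s)^2 - 2*c*Δ + c^2*1) + (∑ s, ν s * (ff n d s)^2 - 2*c*0 + c^2*1)) := hcs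
      _ ≤ 2 * ε * ((∑ s, μ s * (ff n d s)^2 - 2*c*Δ + c^2*1) + (∑ s, ν s * (ff n d s)^2 - 2*c*0 + c^2*1)) := by
          apply mul_le_mul_of_nonneg_right _ hX0
          linarith
      _ ≤ 2*ε*(Δ^2/2 + (d:ℝ)*((n:ℝ)-1)/n) := by
          apply mul_le_mul_of_nonneg_left hsum_le
          linarith
  -- Δ² (1-ε) ≤ 2 ε d(n-1)/n
  have h1ε : 0 < 1 - ε := by linarith
  have hstep : Δ^2 * (1-ε) ≤ 2*ε*((d:ℝ)*((n:ℝ)-1)/n) := by nlinarith [hfinal]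
  rw [hΔ2] at hstep
  have hF2pos : (0:ℝ) < F^2 := by positivity
  have h2 : (lam n d)^(2*t) ≤ (2*ε*((d:ℝ)*((n:ℝ)-1)/n)) / ((1-ε) * F^2) := by
    rw [le_div_iff₀ (by positivity)]
    nlinarith [hstep]
  refine le_trans h2 (le_of_eq ?_)
  rw [hF]
  field_simp


lemma P_pos_of_ham_one (hn : 3 ≤ n) (hd : 2 ≤ d) {x y : Fin d → Fin n}
    (h : hammingDist x y = 1) : 0 < RW.P n d x y := by
  unfold RW.P
  rw [Matrix.of_apply, if_pos h]
  have := hD hn hd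
  positivity

lemma Ppow_pos_step (hn : 3 ≤ n) (hd : 2 ≤ d) {t : ℕ} {x z y : Fin d → Fin n}
    (hxz : hammingDist x z = 1) (hzy : 0 < (RW.P n d ^ t) z y) :
    0 < (RW.P n d ^ (t+1)) x y := by
  rw [pow_succ', Matrix.mul_apply]
  refine Finset.sum_pos' (fun w _ => mul_nonneg (P_nonneg hn hd x w) (Ppow_nonneg hn hd t w y))
    ⟨z, Finset.mem_univ z, mul_pos (P_pos_of_ham_one hn hd hxz) hzy⟩

lemma pos_mul (hn : 3 ≤ n) (hd : 2 ≤ d) {s t : ℕ} {x z y : Fin d → Fin n}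
    (h1 : 0 < (RW.P n d ^ s) x z) (h2 : 0 < (RW.P n d ^ t) z y) :
    0 < (RW.P n d ^ (s+t)) x y := by
  rw [pow_add, Matrix.mul_apply]
  refine Finset.sum_pos' (fun w _ => mul_nonneg (Ppow_nonneg hn hd s x w) (Ppow_nonneg hn hd t w y))
    ⟨z, Finset.mem_univ z, mul_pos h1 h2⟩

lemma ham_update_eq_sub (x y : Fin d → Fin n) (i : Fin d) (hi : x i ≠ y i) :
    hammingDist (Function.update x i (y i)) y = hammingDist x y - 1 := by
  unfold hammingDist
  have hset : Finset.filter (fun j => Function.update x i (y i) j ≠ y j) Finset.univ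
      = (Finset.filter (fun j => x j ≠ y j) Finset.univ).erase i := by
    ext j
    simp only [Finset.mem_filter, Finset.mem_univ, true_and, Finset.mem_erase]
    rcases eq_or_ne j i with rfl | hj
    · simp
    · simp [Function.update_of_ne hj, hj]
  rw [hset]
  exact Finset.card_erase_of_mem (Finset.mem_filter.2 ⟨Finset.mem_univ _, hi⟩)

lemma ham_update_eq (x y : Fin d → Fin n) (i : Fin d) (hi : x i ≠ y i) (c : Fin n)
    (hc : c ≠ y i) : hammingDist (Function.update x i c) y = hammingDist x y := by
  unfold hammingDist
  congr 1
  ext j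
  simp only [Finset.mem_filter, Finset.mem_univ, true_and]
  rcases eq_or_ne j i with rfl | hj
  · simp [hc, hi]
  · simp [Function.update_of_ne hj]

lemma exists_ne_two (hn : 3 ≤ n) (a b : Fin n) : ∃ c : Fin n, c ≠ a ∧ c ≠ b := by
  have hcard : (({a, b} : Finset (Fin n))ᶜ).Nonempty := by
    rw [← Finset.card_pos, Finset.card_compl, Fintype.card_fin]
    have h1 : ({a, b} : Finset (Fin n)).card ≤ 2 :=
      le_trans (Finset.card_insert_le _ _) (by simp)
    omega
  obtain ⟨c, hc⟩ := hcard
  rw [Finset.mem_compl, Finset.mem_insert, Finset.mem_singleton] at hc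
  push_neg at hc
  exact ⟨c, hc.1, hc.2⟩

lemma pos_exact (hn : 3 ≤ n) (hd : 2 ≤ d) :
    ∀ h, 1 ≤ h → ∀ x y : Fin d → Fin n, hammingDist x y = h → 0 < (RW.P n d ^ h) x y := by
  intro h
  induction h with
  | zero => omega
  | succ h ih =>
    intro _ x y hxy
    rcases Nat.eq_zero_or_pos h with rfl | hh
    · rw [pow_one]
      exact P_pos_of_ham_one hn hd hxy
    · have hpos : 0 < hammingDist x y := by omega
      have hne : (Finset.filter (fun j => x j ≠ y j) Finset.univ).Nonempty := by
        rw [← Finset.card_pos]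
        exact hpos
      obtain ⟨i, hi⟩ := hne
      have hxiyi : x i ≠ y i := (Finset.mem_filter.1 hi).2
      have hxz : hammingDist x (Function.update x i (y i)) = 1 :=
        ham_update x i (y i) (Ne.symm hxiyi)
      have hzy : hammingDist (Function.update x i (y i)) y = h := by
        rw [ham_update_eq_sub x y i hxiyi, hxy]
        omega
      exact Ppow_pos_step hn hd hxz (ih hh _ y hzy)

lemma pos_self_two (hn : 3 ≤ n) (hd : 2 ≤ d) (x : Fin d → Fin n) :
    0 < (RW.P n d ^ 2) x x := by
  haveI : NeZero d := ⟨by omega⟩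
  obtain ⟨a, ha, -⟩ := exists_ne_two hn (x 0) (x 0)
  have h1 : hammingDist x (Function.update x 0 a) = 1 := ham_update x 0 a ha
  have h2 : hammingDist (Function.update x 0 a) x = 1 := by
    rw [hammingDist_comm]
    exact h1
  have : 0 < (RW.P n d ^ 1) (Function.update x 0 a) x := by
    rw [pow_one]
    exact P_pos_of_ham_one hn hd h2
  exact Ppow_pos_step hn hd h1 this

lemma pos_self_three (hn : 3 ≤ n) (hd : 2 ≤ d) (x : Fin d → Fin n) :
    0 < (RW.P n d ^ 3) x x := by
  haveI : NeZero d := ⟨by omega⟩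
  obtain ⟨a, ha, -⟩ := exists_ne_two hn (x 0) (x 0)
  obtain ⟨b, hba, hbx⟩ := exists_ne_two hn a (x 0)
  set z1 := Function.update x 0 a with hz1
  set z2 := Function.update x 0 b with hz2
  have h1 : hammingDist x z1 = 1 := ham_update x 0 a ha
  have h12 : hammingDist z1 z2 = 1 := by
    have : z2 = Function.update z1 0 b := by
      rw [hz1, hz2, Function.update_idem]
    rw [this]
    apply ham_update
    rw [hz1, Function.update_self]
    exact hba
  have h2x : hammingDist z2 x = 1 := by
    rw [hammingDist_comm]
    exact ham_update x 0 b hbx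
  have s1 : 0 < (RW.P n d ^ 1) z2 x := by
    rw [pow_one]
    exact P_pos_of_ham_one hn hd h2x
  exact Ppow_pos_step hn hd h1 (Ppow_pos_step hn hd h12 s1)

lemma pos_self (hn : 3 ≤ n) (hd : 2 ≤ d) (x : Fin d → Fin n) :
    ∀ s, 2 ≤ s → 0 < (RW.P n d ^ s) x x := by
  intro s
  induction s using Nat.strong_induction_on with
  | _ s ih =>
    intro hs
    rcases Nat.lt_or_ge s 4 with h4 | h4
    · interval_cases s
      · exact pos_self_two hn hd x
      · exact pos_self_three hn hd x
    · have e : s = 2 + (s - 2) := by omega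
      rw [e]
      exact pos_mul hn hd (pos_self_two hn hd x) (ih (s-2) (by omega) (by omega))

lemma Ppow_pos_all (hn : 3 ≤ n) (hd : 2 ≤ d) (x y : Fin d → Fin n) :
    0 < (RW.P n d ^ (2*d)) x y := by
  have hle : hammingDist x y ≤ d := by
    have := hammingDist_le_card_fintype (x := x) (y := y)
    rwa [Fintype.card_fin] at this
  rcases Nat.eq_zero_or_pos (hammingDist x y) with h0 | h1
  · have : x = y := hammingDist_eq_zero.1 h0
    subst this
    exact pos_self hn hd x (2*d) (by omega)
  · have e : 2*d = hammingDist x y + (2*d - hammingDist x y) := by omega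
    rw [e]
    exact pos_mul hn hd (pos_exact hn hd _ h1 x y rfl)
      (pos_self hn hd y _ (by omega))


lemma contract_step (hn : 3 ≤ n) (hd : 2 ≤ d) (t0 : ℕ) (δ : ℝ)
    (hδle : ∀ x y : Fin d → Fin n, δ ≤ (RW.P n d ^ t0) x y)
    (w : (Fin d → Fin n) → ℝ) (hw : ∑ x, w x = 0) :
    ∑ y, |∑ x, w x * (RW.P n d ^ t0) x y| ≤ (1 - (n:ℝ)^d * δ) * ∑ x, |w x| := by
  have key : ∀ y, |∑ x, w x * (RW.P n d ^ t0) x y|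
      ≤ ∑ x, |w x| * ((RW.P n d ^ t0) x y - δ) := by
    intro y
    have e : ∑ x, w x * (RW.P n d ^ t0) x y = ∑ x, w x * ((RW.P n d ^ t0) x y - δ) := by
      have e2 : ∀ x : Fin d → Fin n, w x * ((RW.P n d ^ t0) x y - δ)
          = w x * (RW.P n d ^ t0) x y - δ * w x := fun x => by ring
      rw [Finset.sum_congr rfl fun x _ => e2 x, Finset.sum_sub_distrib, ← Finset.mul_sum, hw,
        mul_zero, sub_zero]
    rw [e]
    calc |∑ x, w x * ((RW.P n d ^ t0) x y - δ)|
        ≤ ∑ x, |w x * ((RW.P n d ^ t0) x y - δ)| := Finset.abs_sum_le_sum_abs _ _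
      _ = ∑ x, |w x| * ((RW.P n d ^ t0) x y - δ) := by
          apply Finset.sum_congr rfl
          intro x _
          rw [abs_mul, abs_of_nonneg (sub_nonneg.2 (hδle x y))]
  calc ∑ y, |∑ x, w x * (RW.P n d ^ t0) x y|
      ≤ ∑ y, ∑ x, |w x| * ((RW.P n d ^ t0) x y - δ) := Finset.sum_le_sum fun y _ => key y
    _ = ∑ x, |w x| * (∑ y, ((RW.P n d ^ t0) x y - δ)) := by
        rw [Finset.sum_comm]
        exact Finset.sum_congr rfl fun x _ => (Finset.mul_sum _ _ _).symm
    _ = (1 - (n:ℝ)^d * δ) * ∑ x, |w x| := by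
        have hrow : ∀ x : Fin d → Fin n, ∑ y, ((RW.P n d ^ t0) x y - δ) = 1 - (n:ℝ)^d * δ := by
          intro x
          rw [Finset.sum_sub_distrib, Ppow_rowsum hn hd t0 x, Finset.sum_const,
            Finset.card_univ, nsmul_eq_mul, card_state]
        have e3 : ∀ x : Fin d → Fin n, |w x| * (∑ y, ((RW.P n d ^ t0) x y - δ))
            = (1 - (n:ℝ)^d * δ) * |w x| := by
          intro x
          rw [hrow x]
          ring
        rw [Finset.sum_congr rfl fun x _ => e3 x, ← Finset.mul_sum]

lemma iterate_bound (hn : 3 ≤ n) (hd : 2 ≤ d) (t0 : ℕ) (δ : ℝ)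
    (hδle : ∀ x y : Fin d → Fin n, δ ≤ (RW.P n d ^ t0) x y)
    (hθ : 0 ≤ 1 - (n:ℝ)^d * δ) :
    ∀ m (x : Fin d → Fin n),
      ∑ y, |(RW.P n d ^ (t0*m)) x y - RW.pi n d y| ≤ 2 * (1 - (n:ℝ)^d * δ)^m := by
  have hn0 : (0:ℝ) < n := by
    have h3 : (3:ℝ) ≤ n := by exact_mod_cast hn
    linarith
  intro m
  induction m with
  | zero =>
    intro x
    rw [Nat.mul_zero, pow_zero, pow_zero, mul_one]
    have hb : ∀ y, |(1 : Matrix (Fin d → Fin n) (Fin d → Fin n) ℝ) x y - RW.pi n d y|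
        ≤ (1 : Matrix (Fin d → Fin n) (Fin d → Fin n) ℝ) x y + RW.pi n d y := by
      intro y
      have h1 : (0:ℝ) ≤ (1 : Matrix (Fin d → Fin n) (Fin d → Fin n) ℝ) x y := by
        rw [Matrix.one_apply]
        by_cases h : x = y
        · rw [if_pos h]; norm_num
        · rw [if_neg h]
      have h2 : 0 ≤ RW.pi n d y := by unfold RW.pi; positivity
      rw [abs_le]
      constructor <;> linarith
    calc ∑ y, |(1 : Matrix (Fin d → Fin n) (Fin d → Fin n) ℝ) x y - RW.pi n d y|
        ≤ ∑ y, ((1 : Matrix (Fin d → Fin n) (Fin d → Fin n) ℝ) x y + RW.pi n d y) :=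
          Finset.sum_le_sum fun y _ => hb y
      _ = 2 := by
          rw [Finset.sum_add_distrib, sum_pi_one hn]
          have : ∑ y, (1 : Matrix (Fin d → Fin n) (Fin d → Fin n) ℝ) x y = 1 := by
            simp [Matrix.one_apply]
          rw [this]
          norm_num
  | succ m ihm =>
    intro x
    have hdef : ∀ y, (RW.P n d ^ (t0*(m+1))) x y - RW.pi n d y
        = ∑ z, ((RW.P n d ^ (t0*m)) x z - RW.pi n d z) * (RW.P n d ^ t0) z y := by
      intro y
      have e : t0*(m+1) = t0*m + t0 := by ring
      rw [e, pow_add, Matrix.mul_apply]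
      have e2 : ∀ z : Fin d → Fin n, ((RW.P n d ^ (t0*m)) x z - RW.pi n d z) * (RW.P n d ^ t0) z y
          = (RW.P n d ^ (t0*m)) x z * (RW.P n d ^ t0) z y - RW.pi n d z * (RW.P n d ^ t0) z y :=
        fun z => by ring
      rw [Finset.sum_congr rfl fun z _ => e2 z, Finset.sum_sub_distrib]
      have hpi : ∑ z, RW.pi n d z * (RW.P n d ^ t0) z y = RW.pi n d y := by
        unfold RW.pi
        rw [← Finset.mul_sum, Ppow_colsum hn hd t0 y, mul_one]
      rw [hpi]
    have hcong : ∑ y, |(RW.P n d ^ (t0*(m+1))) x y - RW.pi n d y|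
        = ∑ y, |∑ z, ((RW.P n d ^ (t0*m)) x z - RW.pi n d z) * (RW.P n d ^ t0) z y| :=
      Finset.sum_congr rfl fun y _ => congrArg abs (hdef y)
    rw [hcong]
    have hw : ∑ z, ((RW.P n d ^ (t0*m)) x z - RW.pi n d z) = 0 := by
      rw [Finset.sum_sub_distrib, Ppow_rowsum hn hd _ x, sum_pi_one hn]
      ring
    calc ∑ y, |∑ z, ((RW.P n d ^ (t0*m)) x z - RW.pi n d z) * (RW.P n d ^ t0) z y|
        ≤ (1 - (n:ℝ)^d * δ) * ∑ z, |(RW.P n d ^ (t0*m)) x z - RW.pi n d z| :=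
          contract_step hn hd t0 δ hδle _ hw
      _ ≤ (1 - (n:ℝ)^d * δ) * (2 * (1 - (n:ℝ)^d * δ)^m) :=
          mul_le_mul_of_nonneg_left (ihm x) hθ
      _ = 2 * (1 - (n:ℝ)^d * δ)^(m+1) := by
          rw [pow_succ]
          ring

lemma dist_eventually (hn : 3 ≤ n) (hd : 2 ≤ d) (ε : ℝ) (hε0 : 0 < ε) :
    ∃ t, RW.dist n d t ≤ ε := by
  haveI : NeZero n := ⟨by omega⟩
  haveI hnonempty : Nonempty (Fin d → Fin n) := ⟨fun _ => 0⟩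
  have hn0 : (0:ℝ) < n := by
    have h3 : (3:ℝ) ≤ n := by exact_mod_cast hn
    linarith
  obtain ⟨p, -, hp⟩ := Finset.exists_min_image
    (Finset.univ : Finset ((Fin d → Fin n) × (Fin d → Fin n)))
    (fun p => (RW.P n d ^ (2*d)) p.1 p.2) ⟨(fun _ => 0, fun _ => 0), Finset.mem_univ _⟩
  set δ := (RW.P n d ^ (2*d)) p.1 p.2 with hδ
  have hδpos : 0 < δ := Ppow_pos_all hn hd p.1 p.2
  have hδle : ∀ x y : Fin d → Fin n, δ ≤ (RW.P n d ^ (2*d)) x y :=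
    fun x y => hp (x,y) (Finset.mem_univ _)
  have hθ1 : (n:ℝ)^d * δ ≤ 1 := by
    have h1 : ∑ y, (RW.P n d ^ (2*d)) p.1 y = 1 := Ppow_rowsum hn hd _ p.1
    have h2 : ∑ _y : Fin d → Fin n, δ ≤ ∑ y, (RW.P n d ^ (2*d)) p.1 y :=
      Finset.sum_le_sum fun y _ => hδle p.1 y
    rw [h1, Finset.sum_const, Finset.card_univ, nsmul_eq_mul, card_state] at h2
    exact h2
  have hθ0 : 0 < (n:ℝ)^d * δ := by positivity
  obtain ⟨m, hm⟩ := exists_pow_lt_of_lt_one hε0 (by linarith : 1 - (n:ℝ)^d * δ < 1)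
  refine ⟨2*d*m, ?_⟩
  unfold RW.dist
  apply ciSup_le
  intro x
  unfold tv
  have hit := iterate_bound hn hd (2*d) δ hδle (by linarith) m x
  linarith [hit, hm]

end RWProof

/-- Wilson-type lower bound on the mixing time of the Rook's Walk. -/
theorem rook_walk_mixing_lower_bound (n d : ℕ) (hn : 3 ≤ n) (hd : 2 ≤ d)
    (ε : ℝ) (hε0 : 0 < ε) (hε1 : ε < 1) :
    (RW.tmix n d ε : ℝ) ≥
      (Real.log ((d : ℝ) * ((n : ℝ) - 1) / (2 * (n : ℝ))) + Real.log ((1 - ε) / ε)) /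
        (2 * Real.log ((d : ℝ) * ((n : ℝ) - 1) / ((d : ℝ) * ((n : ℝ) - 1) - (n : ℝ)))) := by
  have hD0 := RWProof.hD hn hd
  have hDn0 := RWProof.hDn hn hd
  have hn0 : (0:ℝ) < n := by
    have h3 : (3:ℝ) ≤ n := by exact_mod_cast hn
    linarith
  have h1ε : (0:ℝ) < 1 - ε := by linarith
  have hne : {t : ℕ | RW.dist n d t ≤ ε}.Nonempty := RWProof.dist_eventually hn hd ε hε0
  have hmem : RW.dist n d (RW.tmix n d ε) ≤ ε := Nat.sInf_mem hne
  have hkey := RWProof.key_bound hn hd ε hε0 hε1 _ hmem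
  have hlam0 := RWProof.lam_pos hn hd
  have hlam1 := RWProof.lam_lt_one hn hd
  set T := RW.tmix n d ε with hT
  have hlog : Real.log ((RWProof.lam n d)^(2*T))
      ≤ Real.log ((2*(n:ℝ)/((d:ℝ)*((n:ℝ)-1))) * (ε/(1-ε))) :=
    Real.log_le_log (pow_pos hlam0 _) hkey
  rw [Real.log_pow] at hlog
  have hlogB : Real.log ((2*(n:ℝ)/((d:ℝ)*((n:ℝ)-1))) * (ε/(1-ε)))
      = -(Real.log ((d:ℝ)*((n:ℝ)-1)/(2*(n:ℝ))) + Real.log ((1-ε)/ε)) := by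
    rw [Real.log_mul (by positivity) (by positivity)]
    have e1 : (2*(n:ℝ)/((d:ℝ)*((n:ℝ)-1))) = ((d:ℝ)*((n:ℝ)-1)/(2*(n:ℝ)))⁻¹ := by
      rw [inv_div]
    have e2 : (ε/(1-ε)) = ((1-ε)/ε)⁻¹ := by
      rw [inv_div]
    rw [e1, e2, Real.log_inv, Real.log_inv]
    ring
  have hloglam : Real.log (RWProof.lam n d)
      = -(Real.log ((d:ℝ)*((n:ℝ)-1)/((d:ℝ)*((n:ℝ)-1)-(n:ℝ)))) := by
    have e : RWProof.lam n d = ((d:ℝ)*((n:ℝ)-1)/((d:ℝ)*((n:ℝ)-1)-(n:ℝ)))⁻¹ := by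
      rw [RWProof.lam, inv_div]
    rw [e, Real.log_inv]
  have hL : 0 < Real.log ((d:ℝ)*((n:ℝ)-1)/((d:ℝ)*((n:ℝ)-1)-(n:ℝ))) := by
    apply Real.log_pos
    rw [lt_div_iff₀ hDn0]
    linarith
  rw [hloglam, hlogB] at hlog
  rw [ge_iff_le, div_le_iff₀ (by positivity)]
  push_cast at hlog ⊢
  nlinarith [hlog]
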